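/- arXiv:2210.06317 — 3 statements merged into one kernel-verified Lean document; each statement's English description precedes it below -/
import Mathlib

section
/- Let G be a compact group (or finite group) and ρ, ρ' : G → GL_r(ℂ) semisimple representations. Then ρ and ρ' are locally polyquadratic twists (for every s ∈ G, ρ(s²) and ρ'(s²) have the same characteristic polynomial) if and only if Sym²ρ ⊖ ∧²ρ ≅ Sym²ρ' ⊖ ∧²ρ' as virtual representations, i.e., Sym²ρ ⊕ ∧²ρ' ≅ Sym²ρ' ⊕ ∧²ρ. -/
open CategoryTheory Module Polynomial

variable {G : Type} [Group G]

/-- A quadratic character: a homomorphism to `ℂˣ` whose values square to `1`. -/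
def IsQuadraticChar (χ : G →* ℂˣ) : Prop := ∀ s, χ s * χ s = 1

/-- The twist of a representation by a character. -/
noncomputable def FDRep.twist (χ : G →* ℂˣ) (V : FDRep ℂ G) : FDRep ℂ G :=
  FDRep.of
    { toFun := fun s => (χ s : ℂ) • V.ρ s
      map_one' := by simp
      map_mul' := fun s t => by
        simp only [map_mul, Units.val_mul, mul_smul]
        rw [smul_mul_assoc, mul_smul_comm] }

/-- The direct sum of two finite-dimensional representations. -/
noncomputable def FDRep.dsum (V W : FDRep ℂ G) : FDRep ℂ G :=
  FDRep.of
    { toFun := fun s => LinearMap.prodMap (V.ρ s) (W.ρ s)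
      map_one' := by ext x <;> simp
      map_mul' := fun s t => by ext x <;> simp }

/-- The direct sum of a finite family of finite-dimensional representations. -/
noncomputable def FDRep.dsumFin {t : ℕ} (W : Fin t → FDRep ℂ G) : FDRep ℂ G :=
  FDRep.of (V := ∀ i, W i)
    { toFun := fun s => LinearMap.pi fun i => ((W i).ρ s).comp (LinearMap.proj i)
      map_one' := by ext x i <;> simp
      map_mul' := fun s t => by ext x i <;> simp }

/-- Two representations are polyquadratic twists: they admit direct sum decompositions
whose summands pairwise differ by quadratic characters. -/
noncomputable def IsPolyquadraticTwist (V V' : FDRep ℂ G) : Prop :=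
  ∃ (t : ℕ) (W : Fin t → FDRep ℂ G) (χ : Fin t → (G →* ℂˣ)),
    (∀ i, IsQuadraticChar (χ i)) ∧
    Nonempty (V ≅ FDRep.dsumFin W) ∧
    Nonempty (V' ≅ FDRep.dsumFin fun i => FDRep.twist (χ i) (W i))

/-- Restriction of a representation to a subgroup. -/
noncomputable def FDRep.res (H : Subgroup G) (V : FDRep ℂ G) : FDRep ℂ H :=
  FDRep.of (V.ρ.comp H.subtype)

/-- The one-dimensional representation attached to a character. -/
noncomputable def FDRep.ofChar (χ : G →* ℂˣ) : FDRep ℂ G :=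
  FDRep.of (V := ℂ)
    { toFun := fun s => (χ s : ℂ) • (1 : Module.End ℂ ℂ)
      map_one' := by simp
      map_mul' := fun s t => by
        simp only [map_mul, Units.val_mul, mul_smul]
        rw [smul_mul_assoc, mul_smul_comm, mul_one] }

/-- The characteristic polynomial of the action of a group element. -/
noncomputable def FDRep.cp (V : FDRep ℂ G) (s : G) : Polynomial ℂ :=
  LinearMap.charpoly (V.ρ s)

open TensorProduct

/-- The tensor square of a representation, as a `Representation`. -/
noncomputable def tensorSqRep (V : FDRep ℂ G) : Representation ℂ G (V ⊗[ℂ] V) :=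
  Representation.tprod V.ρ V.ρ

/-- The flip endomorphism of the tensor square. -/
noncomputable def flipMap (V : FDRep ℂ G) : (V ⊗[ℂ] V) →ₗ[ℂ] (V ⊗[ℂ] V) :=
  (TensorProduct.comm ℂ V V).toLinearMap

lemma flip_comm (V : FDRep ℂ G) (s : G) :
    (flipMap V).comp (tensorSqRep V s) = (tensorSqRep V s).comp (flipMap V) := by
  apply TensorProduct.ext'
  intro x y
  simp [flipMap, tensorSqRep, Representation.tprod_apply]

/-- Restriction of a representation to an invariant submodule. -/
noncomputable def Representation.subrep {W : Type} [AddCommGroup W] [Module ℂ W]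
    (ρ : Representation ℂ G W) (p : Submodule ℂ W)
    (h : ∀ s : G, ∀ x ∈ p, ρ s x ∈ p) : Representation ℂ G p where
  toFun s := (ρ s).restrict (h s)
  map_one' := by ext x; simp [LinearMap.restrict_apply]
  map_mul' s t := by ext x; simp [LinearMap.restrict_apply]

/-- The submodule of symmetric tensors. -/
noncomputable def symSubmodule (V : FDRep ℂ G) : Submodule ℂ (V ⊗[ℂ] V) :=
  LinearMap.ker (flipMap V - LinearMap.id)

/-- The submodule of antisymmetric tensors. -/
noncomputable def altSubmodule (V : FDRep ℂ G) : Submodule ℂ (V ⊗[ℂ] V) :=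
  LinearMap.ker (flipMap V + LinearMap.id)

lemma symSubmodule_invariant (V : FDRep ℂ G) :
    ∀ s : G, ∀ x ∈ symSubmodule V, tensorSqRep V s x ∈ symSubmodule V := by
  intro s x hx
  simp only [symSubmodule, LinearMap.mem_ker, LinearMap.sub_apply, LinearMap.id_apply,
    sub_eq_zero] at hx ⊢
  calc flipMap V (tensorSqRep V s x) = tensorSqRep V s (flipMap V x) := by
        have := flip_comm V s
        exact LinearMap.congr_fun this x
    _ = tensorSqRep V s x := by rw [hx]

lemma altSubmodule_invariant (V : FDRep ℂ G) :
    ∀ s : G, ∀ x ∈ altSubmodule V, tensorSqRep V s x ∈ altSubmodule V := by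
  intro s x hx
  simp only [altSubmodule, LinearMap.mem_ker, LinearMap.add_apply, LinearMap.id_apply,
    add_eq_zero_iff_eq_neg] at hx ⊢
  calc flipMap V (tensorSqRep V s x) = tensorSqRep V s (flipMap V x) := by
        have := flip_comm V s
        exact LinearMap.congr_fun this x
    _ = -(tensorSqRep V s x) := by rw [hx]; simp

/-- The symmetric square of a representation. -/
noncomputable def symSq (V : FDRep ℂ G) : FDRep ℂ G :=
  FDRep.of ((tensorSqRep V).subrep (symSubmodule V) (symSubmodule_invariant V))

/-- The exterior (alternating) square of a representation. -/
noncomputable def altSq (V : FDRep ℂ G) : FDRep ℂ G :=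
  FDRep.of ((tensorSqRep V).subrep (altSubmodule V) (altSubmodule_invariant V))


section Aux
open LinearMap

lemma trace_restrict_add_of_isCompl {K : Type} [Field K] {W : Type} [AddCommGroup W]
    [Module K W] [FiniteDimensional K W]
    (p q : Submodule K W) (h : IsCompl p q) (T : W →ₗ[K] W)
    (hp : ∀ x ∈ p, T x ∈ p) (hq : ∀ x ∈ q, T x ∈ q) :
    trace K W T = trace K p (T.restrict hp) + trace K q (T.restrict hq) := by
  let e : (p × q) ≃ₗ[K] W := Submodule.prodEquivOfIsCompl p q h
  have he : ∀ z : p × q, e z = (z.1 : W) + (z.2 : W) := fun z => rfl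
  have key : e.symm.conj T = (T.restrict hp).prodMap (T.restrict hq) := by
    apply LinearMap.ext; intro z
    apply e.injective
    rw [LinearEquiv.conj_apply]
    simp only [LinearMap.comp_apply, LinearEquiv.coe_coe, LinearEquiv.apply_symm_apply]
    rw [LinearEquiv.symm_symm, he, he]
    simp only [LinearMap.prodMap_apply, LinearMap.restrict_coe_apply, map_add]
  have := LinearMap.trace_conj' T e.symm
  rw [key] at this
  rw [← this, LinearMap.trace_prodMap']

lemma trace_comm_comp_map {K : Type} [Field K] {W : Type} [AddCommGroup W]
    [Module K W] [FiniteDimensional K W] (A : W →ₗ[K] W) :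
    trace K _ ((TensorProduct.comm K W W).toLinearMap ∘ₗ TensorProduct.map A A)
      = trace K W (A ∘ₗ A) := by
  let b := Module.finBasis K W
  let B := b.tensorProduct b
  rw [LinearMap.trace_eq_matrix_trace K B, LinearMap.trace_eq_matrix_trace K b]
  rw [Matrix.trace, Matrix.trace]
  rw [Fintype.sum_prod_type]
  have hB : ∀ i j, ((LinearMap.toMatrix B B)
      ((TensorProduct.comm K W W).toLinearMap ∘ₗ TensorProduct.map A A)).diag (i, j)
      = (LinearMap.toMatrix b b A) i j * (LinearMap.toMatrix b b A) j i := by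
    intro i j
    rw [Matrix.diag_apply, LinearMap.toMatrix_apply]
    have : B (i, j) = b i ⊗ₜ[K] b j := Basis.tensorProduct_apply b b i j
    rw [this]
    simp only [LinearMap.comp_apply, TensorProduct.map_tmul, LinearEquiv.coe_coe,
      TensorProduct.comm_tmul]
    rw [Basis.tensorProduct_repr_tmul_apply]
    rw [LinearMap.toMatrix_apply, LinearMap.toMatrix_apply, smul_eq_mul]
    ring
  simp only [hB]
  rw [LinearMap.toMatrix_comp b b b]
  simp only [Matrix.diag_apply, Matrix.mul_apply]

end Aux


section CharSq
open LinearMap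

lemma mem_symSubmodule (V : FDRep ℂ G) (x : V ⊗[ℂ] V) :
    x ∈ symSubmodule V ↔ flipMap V x = x := by
  simp [symSubmodule, sub_eq_zero]

lemma mem_altSubmodule (V : FDRep ℂ G) (x : V ⊗[ℂ] V) :
    x ∈ altSubmodule V ↔ flipMap V x = -x := by
  simp [altSubmodule, add_eq_zero_iff_eq_neg]

lemma flipMap_flipMap (V : FDRep ℂ G) (x : V ⊗[ℂ] V) : flipMap V (flipMap V x) = x := by
  have h : (flipMap V) ∘ₗ (flipMap V) = LinearMap.id := by
    apply TensorProduct.ext'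
    intro a b
    simp [flipMap]
  exact congrFun (congrArg DFunLike.coe h) x

lemma isCompl_symSubmodule_altSubmodule (V : FDRep ℂ G) :
    IsCompl (symSubmodule V) (altSubmodule V) := by
  constructor
  · rw [disjoint_iff]
    apply eq_bot_iff.2
    intro x hx
    rw [Submodule.mem_inf] at hx
    obtain ⟨hs, ha⟩ := hx
    rw [Submodule.mem_bot]
    rw [mem_symSubmodule] at hs
    rw [mem_altSubmodule] at ha
    have hxx : x = -x := hs.symm.trans ha
    have h2 : (2 : ℂ) • x = 0 := by
      rw [two_smul]
      nth_rewrite 1 [hxx]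
      simp
    simpa using smul_eq_zero.mp h2
  · rw [codisjoint_iff]
    apply eq_top_iff.2
    intro x _
    have hx : x = ((2:ℂ)⁻¹ • (x + flipMap V x)) + ((2:ℂ)⁻¹ • (x - flipMap V x)) := by
      rw [← smul_add]
      have : x + flipMap V x + (x - flipMap V x) = (2:ℂ) • x := by
        rw [two_smul]; abel
      rw [this, smul_smul]
      norm_num
    rw [hx]
    apply Submodule.add_mem_sup
    · rw [mem_symSubmodule]
      rw [map_smul, map_add, flipMap_flipMap]
      rw [add_comm]
    · rw [mem_altSubmodule]
      rw [map_smul, map_sub, flipMap_flipMap, ← smul_neg]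
      congr 1
      abel

lemma char_dsum (V W : FDRep ℂ G) (s : G) :
    (FDRep.dsum V W).character s = V.character s + W.character s := by
  have : (FDRep.dsum V W).character s
      = LinearMap.trace ℂ (V × W) ((V.ρ s).prodMap (W.ρ s)) := rfl
  rw [this, LinearMap.trace_prodMap']
  rfl

lemma char_symSq_altSq (V : FDRep ℂ G) (s : G) :
    ((symSq V).character s + (altSq V).character s = V.character s * V.character s) ∧
    ((symSq V).character s - (altSq V).character s = V.character (s * s)) := by
  set T := tensorSqRep V s with hTdef
  set F := flipMap V with hFdef
  have hsym : (symSq V).character s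
      = trace ℂ (symSubmodule V) (T.restrict (symSubmodule_invariant V s)) := rfl
  have halt : (altSq V).character s
      = trace ℂ (altSubmodule V) (T.restrict (altSubmodule_invariant V s)) := rfl
  have hT : trace ℂ _ T
      = trace ℂ (symSubmodule V) (T.restrict (symSubmodule_invariant V s))
        + trace ℂ (altSubmodule V) (T.restrict (altSubmodule_invariant V s)) :=
    trace_restrict_add_of_isCompl _ _ (isCompl_symSubmodule_altSubmodule V) _ _ _
  have hTval : trace ℂ _ T = V.character s * V.character s := by
    have : T = TensorProduct.map (V.ρ s) (V.ρ s) := rfl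
    rw [this, LinearMap.trace_tensorProduct']
    rfl
  have hFp : ∀ x ∈ symSubmodule V, (F ∘ₗ T) x ∈ symSubmodule V := by
    intro x hx
    have h1 := symSubmodule_invariant V s x hx
    rw [mem_symSubmodule] at h1 ⊢
    simp only [LinearMap.comp_apply, ← hFdef] at h1 ⊢
    rw [h1]
    exact h1
  have hFq : ∀ x ∈ altSubmodule V, (F ∘ₗ T) x ∈ altSubmodule V := by
    intro x hx
    have h1 := altSubmodule_invariant V s x hx
    rw [mem_altSubmodule] at h1 ⊢
    simp only [LinearMap.comp_apply, ← hFdef] at h1 ⊢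
    rw [h1, map_neg, h1]
  have hFT : trace ℂ _ (F ∘ₗ T)
      = trace ℂ (symSubmodule V) ((F ∘ₗ T).restrict hFp)
        + trace ℂ (altSubmodule V) ((F ∘ₗ T).restrict hFq) :=
    trace_restrict_add_of_isCompl _ _ (isCompl_symSubmodule_altSubmodule V) _ _ _
  have hrp : (F ∘ₗ T).restrict hFp = T.restrict (symSubmodule_invariant V s) := by
    apply LinearMap.ext
    intro x
    apply Subtype.ext
    simp only [LinearMap.restrict_coe_apply, LinearMap.comp_apply]
    exact (mem_symSubmodule V _).mp (symSubmodule_invariant V s x x.2)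
  have hrq : (F ∘ₗ T).restrict hFq = - (T.restrict (altSubmodule_invariant V s)) := by
    apply LinearMap.ext
    intro x
    apply Subtype.ext
    simp only [LinearMap.restrict_coe_apply, LinearMap.comp_apply, LinearMap.neg_apply,
      Submodule.coe_neg]
    exact (mem_altSubmodule V _).mp (altSubmodule_invariant V s x x.2)
  have hFTval : trace ℂ _ (F ∘ₗ T) = V.character (s * s) := by
    have h1 : F ∘ₗ T = (TensorProduct.comm ℂ V V).toLinearMap
        ∘ₗ TensorProduct.map (V.ρ s) (V.ρ s) := rfl
    rw [h1, trace_comm_comp_map]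
    have h2 : (V.ρ s) ∘ₗ (V.ρ s) = V.ρ (s * s) := by
      rw [map_mul]
      rfl
    rw [h2]
    rfl
  constructor
  · rw [hsym, halt, ← hT, hTval]
  · have hneg : trace ℂ (altSubmodule V) ((F ∘ₗ T).restrict hFq)
        = - trace ℂ (altSubmodule V) (T.restrict (altSubmodule_invariant V s)) := by
      rw [hrq]
      exact map_neg (trace ℂ (altSubmodule V)) _
    rw [hrp, hneg] at hFT
    rw [hsym, halt, ← hFTval, hFT]
    ring

end CharSq


section IsoOfChar
open LinearMap

/-- Build an isomorphism of `FDRep`s from an equivariant linear equivalence. -/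
noncomputable def mkIsoOfEquiv {V W : FDRep ℂ G} (e : V ≃ₗ[ℂ] W)
    (he : ∀ (g : G) (x : V), e (V.ρ g x) = W.ρ g (e x)) : V ≅ W :=
  Action.mkIso
    ({ hom := FGModuleCat.ofHom (e : V →ₗ[ℂ] W)
       inv := FGModuleCat.ofHom (e.symm : W →ₗ[ℂ] V)
       hom_inv_id := by ext x; exact e.symm_apply_apply x
       inv_hom_id := by ext x; exact e.apply_symm_apply x } : V.V ≅ W.V)
    (fun g => by ext x; exact he g x)

lemma equivariant_of_iso {A B : FDRep ℂ G} (i : A ≅ B) (g : G) (x : A) :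
    FDRep.isoToLinearEquiv i (A.ρ g x) = B.ρ g (FDRep.isoToLinearEquiv i x) := by
  rw [FDRep.Iso.conj_ρ i]
  simp [LinearEquiv.conj_apply]

lemma fdRepHomComm {X Y : FDRep ℂ G} (f : X ⟶ Y) (g : G) (x : X) :
    f.hom (X.ρ g x) = Y.ρ g (f.hom x) :=
  congrArg (fun φ => φ.hom.hom x) (f.comm g)

/-- The subrepresentation attached to an invariant submodule, as an `FDRep`. -/
noncomputable def FDRep.subrepOf (V : FDRep ℂ G) (p : Submodule ℂ V)
    (h : ∀ g : G, ∀ x ∈ p, V.ρ g x ∈ p) : FDRep ℂ G :=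
  FDRep.of (Representation.subrep V.ρ p h)

/-- A decomposition of a representation along complementary invariant submodules. -/
noncomputable def isoDsumOfIsCompl (V : FDRep ℂ G) (p q : Submodule ℂ V)
    (hp : ∀ g : G, ∀ x ∈ p, V.ρ g x ∈ p) (hq : ∀ g : G, ∀ x ∈ q, V.ρ g x ∈ q)
    (h : IsCompl p q) :
    V ≅ FDRep.dsum (V.subrepOf p hp) (V.subrepOf q hq) := by
  have he0 : ∀ (g : G) (z : ↥p × ↥q),
      (Submodule.prodEquivOfIsCompl p q h) (Representation.subrep V.ρ p hp g z.1,
        Representation.subrep V.ρ q hq g z.2)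
        = V.ρ g (Submodule.prodEquivOfIsCompl p q h z) := by
    intro g z
    have hz : ∀ w : ↥p × ↥q,
        (Submodule.prodEquivOfIsCompl p q h) w = (w.1 : V) + (w.2 : V) := fun _ => rfl
    rw [hz, hz]
    simp only [Representation.subrep, MonoidHom.coe_mk, OneHom.coe_mk,
      LinearMap.restrict_coe_apply, map_add]
  exact (mkIsoOfEquiv (V := FDRep.dsum (V.subrepOf p hp) (V.subrepOf q hq)) (W := V)
    (by exact Submodule.prodEquivOfIsCompl p q h) (by exact he0)).symm

/-- Congruence of direct sums. -/
noncomputable def dsumCongr {A A' B B' : FDRep ℂ G} (i : A ≅ A') (j : B ≅ B') :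
    FDRep.dsum A B ≅ FDRep.dsum A' B' := by
  refine mkIsoOfEquiv
    (by exact (FDRep.isoToLinearEquiv i).prodCongr (FDRep.isoToLinearEquiv j)) ?_
  intro g z
  have h1 := equivariant_of_iso i g z.1
  have h2 := equivariant_of_iso j g z.2
  exact Prod.ext h1 h2

/-- Swapping a direct sum. -/
noncomputable def dsumComm (A B : FDRep ℂ G) : FDRep.dsum A B ≅ FDRep.dsum B A := by
  refine mkIsoOfEquiv (by exact LinearEquiv.prodComm ℂ A B) ?_
  intro g z
  rfl

variable [Fintype G]

/-- Maschke: an invariant submodule admits an invariant complement. -/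
lemma exists_invariant_compl (V : FDRep ℂ G) (p : Submodule ℂ V)
    (hp : ∀ g : G, ∀ x ∈ p, V.ρ g x ∈ p) :
    ∃ q : Submodule ℂ V, IsCompl p q ∧ ∀ g : G, ∀ x ∈ q, V.ρ g x ∈ q := by
  obtain ⟨q₀, h₀⟩ := Submodule.exists_isCompl p
  set π₀ := p.projectionOnto q₀ h₀ with hπ₀
  have hπ₀p : ∀ x ∈ p, ((π₀ x : p) : V) = x := by
    intro x hx
    have := Submodule.linearProjOfIsCompl_apply_left h₀ ⟨x, hx⟩
    rw [show ((⟨x, hx⟩ : p) : V) = x from rfl] at this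
    rw [this]
  set T : G → (V →ₗ[ℂ] V) :=
    fun g => (V.ρ g) ∘ₗ (p.subtype ∘ₗ (π₀ ∘ₗ (V.ρ g⁻¹))) with hT
  set π : V →ₗ[ℂ] V := (Fintype.card G : ℂ)⁻¹ • ∑ g : G, T g with hπ
  have hTmem : ∀ g x, T g x ∈ p := by
    intro g x
    exact hp g _ (π₀ (V.ρ g⁻¹ x)).2
  have hmem : ∀ x, π x ∈ p := by
    intro x
    rw [hπ]
    simp only [LinearMap.smul_apply, LinearMap.sum_apply]
    exact Submodule.smul_mem _ _ (Submodule.sum_mem _ fun g _ => hTmem g x)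
  have hfix : ∀ x ∈ p, π x = x := by
    intro x hx
    have hTx : ∀ g : G, T g x = x := by
      intro g
      rw [hT]
      simp only [LinearMap.comp_apply, Submodule.coe_subtype]
      rw [hπ₀p _ (hp g⁻¹ x hx)]
      rw [← Module.End.mul_apply, ← map_mul, mul_inv_cancel, map_one]
      rfl
    rw [hπ]
    simp only [LinearMap.smul_apply, LinearMap.sum_apply, hTx]
    rw [Finset.sum_const, Finset.card_univ, ← Nat.cast_smul_eq_nsmul ℂ, smul_smul,
      inv_mul_cancel₀ (by exact_mod_cast Fintype.card_ne_zero), one_smul]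
  have hequiv : ∀ (h : G) (x : V), π (V.ρ h x) = V.ρ h (π x) := by
    intro h x
    have key : ∀ g : G, T (h * g) (V.ρ h x) = V.ρ h (T g x) := by
      intro g
      rw [hT]
      simp only [LinearMap.comp_apply, Submodule.coe_subtype]
      have e1 : V.ρ (h * g)⁻¹ (V.ρ h x) = V.ρ g⁻¹ x := by
        rw [← Module.End.mul_apply, ← map_mul]
        congr 1
        group
      rw [e1, map_mul, Module.End.mul_apply]
    have hsum : ∑ g : G, T g (V.ρ h x) = ∑ g : G, V.ρ h (T g x) :=
      (Fintype.sum_equiv (Equiv.mulLeft h) (fun a => V.ρ h (T a x))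
        (fun a => T a (V.ρ h x)) (fun a => (key a).symm)).symm
    have h1 : π (V.ρ h x) = (Fintype.card G : ℂ)⁻¹ • ∑ g : G, T g (V.ρ h x) := by
      rw [hπ]
      simp [LinearMap.sum_apply]
    have h2 : π x = (Fintype.card G : ℂ)⁻¹ • ∑ g : G, T g x := by
      rw [hπ]
      simp [LinearMap.sum_apply]
    rw [h1, h2, hsum, ← map_sum, ← map_smul]
  set π' : V →ₗ[ℂ] p := π.codRestrict p hmem with hπ'
  have hproj : ∀ x : p, π' x = x := by
    intro x
    apply Subtype.ext
    rw [hπ']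
    simp only [LinearMap.codRestrict_apply]
    exact hfix _ x.2
  refine ⟨LinearMap.ker π', LinearMap.isCompl_of_proj hproj, ?_⟩
  intro g x hx
  rw [LinearMap.mem_ker] at hx ⊢
  apply Subtype.ext
  rw [hπ']
  simp only [LinearMap.codRestrict_apply]
  rw [hπ'] at hx
  have hx0 : π x = 0 := by
    have := congrArg (Subtype.val) hx
    simpa using this
  rw [hequiv, hx0, map_zero]
  rfl

end IsoOfChar


section CharDeterminesIso
open LinearMap

lemma finrank_hom_eq {H : Type} [Group H] [Fintype H] (X Y : FDRep ℂ H) :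
    ((finrank ℂ (X ⟶ Y) : ℂ))
      = (⅟(Fintype.card H : ℂ)) • ∑ g : H, X.character g⁻¹ * Y.character g := by
  letI : Invertible (Fintype.card H : ℂ) :=
    invertibleOfNonzero (by exact_mod_cast Fintype.card_ne_zero)
  have h1 := FDRep.average_char_eq_finrank_invariants
    (FDRep.of (Representation.linHom X.ρ Y.ρ))
  have h2 : ∀ g : H, (FDRep.of (Representation.linHom X.ρ Y.ρ)).character g
      = X.character g⁻¹ * Y.character g := fun g => FDRep.char_linHom X Y g
  have h3 : finrank ℂ ((Representation.linHom X.ρ Y.ρ).invariants) = finrank ℂ (X ⟶ Y) :=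
    (Representation.linHom.invariantsEquivFDRepHom (G := GrpCat.of H) X Y).finrank_eq
  calc ((finrank ℂ (X ⟶ Y) : ℂ))
      = ((finrank ℂ ((Representation.linHom X.ρ Y.ρ).invariants) : ℂ)) := by rw [h3]
    _ = ⅟(Fintype.card H : ℂ) • ∑ g : H,
          (FDRep.of (Representation.linHom X.ρ Y.ρ)).character g := by
          rw [invOf_eq_inv, smul_eq_mul, ← Nat.card_eq_fintype_card]; exact h1.symm
    _ = ⅟(Fintype.card H : ℂ) • ∑ g : H, X.character g⁻¹ * Y.character g := by
        congr 1
        exact Finset.sum_congr rfl fun g _ => h2 g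

lemma finrank_hom_congr {H : Type} [Group H] [Fintype H] (X Y Y' : FDRep ℂ H)
    (h : ∀ g, Y.character g = Y'.character g) :
    finrank ℂ (X ⟶ Y) = finrank ℂ (X ⟶ Y') := by
  have h1 := finrank_hom_eq X Y
  have h2 := finrank_hom_eq X Y'
  have hs : ∑ g : H, X.character g⁻¹ * Y.character g
      = ∑ g : H, X.character g⁻¹ * Y'.character g :=
    Finset.sum_congr rfl fun g _ => by rw [h g]
  rw [hs] at h1
  exact_mod_cast h1.trans h2.symm

theorem iso_of_char_eq {H : Type} [Group H] [Fintype H] (X Y : FDRep ℂ H)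
    (hχ : ∀ g, X.character g = Y.character g) : Nonempty (X ≅ Y) := by
  suffices Hind : ∀ n : ℕ, ∀ X Y : FDRep ℂ H, finrank ℂ X = n →
      (∀ g, X.character g = Y.character g) → Nonempty (X ≅ Y) by
    exact Hind _ X Y rfl hχ
  intro n
  induction n using Nat.strong_induction_on with
  | _ n ih =>
  intro X Y hn hχ
  by_cases h0 : finrank ℂ X = 0
  · have hY0 : finrank ℂ Y = 0 := by
      have h1 := hχ 1
      rw [FDRep.char_one, FDRep.char_one] at h1
      have : ((finrank ℂ Y : ℂ)) = 0 := by rw [← h1]; exact_mod_cast h0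
      exact_mod_cast this
    haveI hsX : Subsingleton X := Module.finrank_zero_iff.mp h0
    haveI hsY : Subsingleton Y := Module.finrank_zero_iff.mp hY0
    exact ⟨mkIsoOfEquiv (LinearEquiv.ofSubsingleton _ _)
      (fun g x => Subsingleton.elim _ _)⟩
  · have hpos : 0 < finrank ℂ X := Nat.pos_of_ne_zero h0
    haveI : Nontrivial X := Module.finrank_pos_iff.mp hpos
    have hid : (𝟙 X : X ⟶ X) ≠ 0 := by
      intro hcontra
      obtain ⟨x, hx⟩ := exists_ne (0 : X)
      have hx2 : (𝟙 X : X ⟶ X).hom x = (0 : X ⟶ X).hom x := by rw [hcontra]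
      simp only [Action.id_hom, Action.zero_hom] at hx2
      exact hx (hx2.trans rfl)
    haveI : Nontrivial (X ⟶ X) := nontrivial_of_ne _ _ hid
    have hposH : 0 < finrank ℂ (X ⟶ X) := Module.finrank_pos_iff.mpr ‹_›
    have hXY : 0 < finrank ℂ (X ⟶ Y) := by
      rw [← finrank_hom_congr X X Y hχ]
      exact hposH
    haveI : Nontrivial (X ⟶ Y) := Module.finrank_pos_iff.mp hXY
    obtain ⟨f, hf⟩ := exists_ne (0 : X ⟶ Y)
    set φ : X →ₗ[ℂ] Y := f.hom.hom.hom with hφdef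
    have hfhom : φ ≠ 0 := by
      intro hc
      apply hf
      apply Action.Hom.ext
      apply FGModuleCat.hom_ext
      rw [show f.hom.hom.hom = φ from rfl, hc]
      rfl
    have hφcomm : ∀ (g : H) (x : X), φ (X.ρ g x) = Y.ρ g (φ x) := fun g x => fdRepHomComm f g x
    have hker : ∀ g : H, ∀ x ∈ LinearMap.ker φ, X.ρ g x ∈ LinearMap.ker φ := by
      intro g x hx
      rw [LinearMap.mem_ker] at hx ⊢
      rw [hφcomm, hx, map_zero]
    have hrange : ∀ g : H, ∀ y ∈ LinearMap.range φ, Y.ρ g y ∈ LinearMap.range φ := by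
      rintro g y ⟨x, hx⟩
      exact ⟨X.ρ g x, by rw [hφcomm, hx]⟩
    obtain ⟨p', hcmpl, hp'⟩ := exists_invariant_compl X (LinearMap.ker φ) hker
    obtain ⟨q', hcmpl', hq'⟩ := exists_invariant_compl Y (LinearMap.range φ) hrange
    set K : FDRep ℂ H := X.subrepOf (LinearMap.ker φ) hker with hK
    set K' : FDRep ℂ H := X.subrepOf p' hp' with hK'
    set R : FDRep ℂ H := Y.subrepOf (LinearMap.range φ) hrange with hR
    set R' : FDRep ℂ H := Y.subrepOf q' hq' with hR'
    have isoX : X ≅ FDRep.dsum K K' := isoDsumOfIsCompl X _ _ hker hp' hcmpl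
    have isoY : Y ≅ FDRep.dsum R R' := isoDsumOfIsCompl Y _ _ hrange hq' hcmpl'
    -- the isomorphism K' ≅ R
    let ψ₀ : p' →ₗ[ℂ] LinearMap.range φ :=
      (φ ∘ₗ p'.subtype).codRestrict (LinearMap.range φ)
        (fun x => LinearMap.mem_range_self _ _)
    have hval : ∀ x : p', (ψ₀ x : Y) = φ (x : X) := fun x => rfl
    have hψinj : Function.Injective ψ₀ := by
      intro a b hab
      have h1 : φ ((a : X) - (b : X)) = 0 := by
        rw [map_sub, ← hval, ← hval, hab, sub_self]
      have h2 : ((a - b : p') : X) ∈ LinearMap.ker φ := by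
        rw [LinearMap.mem_ker]
        rw [Submodule.coe_sub]
        exact h1
      have h3 : ((a - b : p') : X) = 0 :=
        Submodule.disjoint_def.mp hcmpl.disjoint.symm _ (a - b).2 h2
      have h4 : (a - b : p') = 0 := by exact_mod_cast h3
      rwa [sub_eq_zero] at h4
    have hψsurj : Function.Surjective ψ₀ := by
      rintro ⟨y, x, hx⟩
      have hxmem : x ∈ (LinearMap.ker φ) ⊔ p' := by
        rw [hcmpl.sup_eq_top]
        trivial
      obtain ⟨a, ha, b, hb, hab⟩ := Submodule.mem_sup.mp hxmem
      refine ⟨⟨b, hb⟩, ?_⟩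
      apply Subtype.ext
      rw [hval]
      show φ b = y
      rw [LinearMap.mem_ker] at ha
      rw [← hx, ← hab, map_add, ha, zero_add]
    have he0 : ∀ (g : H) (x : ↥p'),
        (LinearEquiv.ofBijective ψ₀ ⟨hψinj, hψsurj⟩) (Representation.subrep X.ρ p' hp' g x)
          = Representation.subrep Y.ρ (LinearMap.range φ) hrange g
            ((LinearEquiv.ofBijective ψ₀ ⟨hψinj, hψsurj⟩) x) := by
      intro g x
      apply Subtype.ext
      show (ψ₀ _ : Y) = (Representation.subrep Y.ρ (LinearMap.range φ) hrange g (ψ₀ x) : Y)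
      rw [hval]
      show φ ((Representation.subrep X.ρ p' hp' g x : p') : X) = _
      have l1 : ((Representation.subrep X.ρ p' hp' g x : p') : X) = X.ρ g (x : X) := rfl
      have l2 : ((Representation.subrep Y.ρ (LinearMap.range φ) hrange g (ψ₀ x)
          : LinearMap.range φ) : Y) = Y.ρ g ((ψ₀ x : Y)) := rfl
      rw [l1, l2, hval]
      exact hφcomm g x
    have iso2 : K' ≅ R :=
      mkIsoOfEquiv (V := K') (W := R)
        (by exact LinearEquiv.ofBijective ψ₀ ⟨hψinj, hψsurj⟩) (by exact he0)
    -- character bookkeeping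
    have hchar2 : ∀ g, K'.character g = R.character g := fun g =>
      congrFun (FDRep.char_iso iso2) g
    have hXc : ∀ g, X.character g = K.character g + K'.character g := fun g => by
      rw [congrFun (FDRep.char_iso isoX) g, char_dsum]
    have hYc : ∀ g, Y.character g = R.character g + R'.character g := fun g => by
      rw [congrFun (FDRep.char_iso isoY) g, char_dsum]
    have hKR' : ∀ g, K.character g = R'.character g := by
      intro g
      have hx := hXc g
      have hy := hYc g
      have h2 := hchar2 g
      have h3 := hχ g
      linear_combination -hx + hy - h2 + h3
    -- dimension counting
    have hd1 : finrank ℂ X = finrank ℂ K + finrank ℂ K' := by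
      have h1 := hXc 1
      rw [FDRep.char_one, FDRep.char_one, FDRep.char_one] at h1
      exact_mod_cast h1
    have hd2 : finrank ℂ K' = finrank ℂ R := by
      have h1 := hchar2 1
      rw [FDRep.char_one, FDRep.char_one] at h1
      exact_mod_cast h1
    have hRfr : finrank ℂ R = finrank ℂ (LinearMap.range φ) := rfl
    have hRpos : 0 < finrank ℂ R := by
      rw [hRfr]
      rcases Nat.eq_zero_or_pos (finrank ℂ (LinearMap.range φ)) with hz | hpos'
      · exfalso
        exact hfhom (LinearMap.range_eq_bot.mp (Submodule.finrank_eq_zero.mp hz))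
      · exact hpos'
    have hKlt : finrank ℂ K < n := by omega
    obtain ⟨iso3⟩ := ih (finrank ℂ K) hKlt K R' rfl hKR'
    exact ⟨isoX ≪≫ dsumCongr iso3 iso2 ≪≫ dsumComm R' R ≪≫ isoY.symm⟩

end CharDeterminesIso


section Final
open LinearMap

lemma char_eq_zero_of_finrank_zero (V : FDRep ℂ G) (g : G) (h0 : finrank ℂ V = 0) :
    V.character g = 0 := by
  haveI : Subsingleton ((V : Type) →ₗ[ℂ] V) := by
    haveI : Subsingleton (V : Type) := Module.finrank_zero_iff.mp h0
    infer_instance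
  have hz : V.ρ g = 0 := Subsingleton.elim _ _
  show LinearMap.trace ℂ V (V.ρ g) = 0
  rw [hz, map_zero]

lemma char_eq_neg_coeff (V : FDRep ℂ G) (g : G) (h0 : finrank ℂ V ≠ 0) :
    V.character g = -(LinearMap.charpoly (V.ρ g)).coeff (finrank ℂ V - 1) := by
  haveI : Nonempty (Fin (finrank ℂ V)) := ⟨⟨0, Nat.pos_of_ne_zero h0⟩⟩
  let b := Module.finBasis ℂ V
  have h1 : V.character g = Matrix.trace (LinearMap.toMatrix b b (V.ρ g)) :=
    LinearMap.trace_eq_matrix_trace ℂ b (V.ρ g)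
  rw [h1, Matrix.trace_eq_neg_charpoly_coeff, LinearMap.charpoly_toMatrix, Fintype.card_fin]

lemma char_eq_of_cp_eq {V W : FDRep ℂ G} (g : G) (hr : finrank ℂ V = finrank ℂ W)
    (h : LinearMap.charpoly (V.ρ g) = LinearMap.charpoly (W.ρ g)) :
    V.character g = W.character g := by
  by_cases h0 : finrank ℂ V = 0
  · rw [char_eq_zero_of_finrank_zero V g h0,
      char_eq_zero_of_finrank_zero W g (by rw [← hr]; exact h0)]
  · rw [char_eq_neg_coeff V g h0, char_eq_neg_coeff W g (by rw [← hr]; exact h0), h, hr]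

lemma sq_zpow (s : G) (k : ℤ) : (s * s) ^ k = (s ^ k) * (s ^ k) := by
  have h2 : s * s = s ^ (2 : ℤ) := (zpow_two s).symm
  rw [h2, ← zpow_mul, mul_comm (2 : ℤ) k, zpow_mul, zpow_two]

end Final

/-- Two representations are locally polyquadratic twists (the characteristic polynomials
of `ρ(s²)` and `ρ'(s²)` agree for all `s`) if and only if
`Sym²ρ ⊖ ∧²ρ ≅ Sym²ρ' ⊖ ∧²ρ'` as virtual representations, i.e.
`Sym²ρ ⊕ ∧²ρ' ≅ Sym²ρ' ⊕ ∧²ρ`. -/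
theorem stmt5 [Finite G] (r : ℕ) (ρ ρ' : FDRep ℂ G)
    (hr : finrank ℂ ρ = r) (hr' : finrank ℂ ρ' = r) :
    (∀ s : G, FDRep.cp ρ (s * s) = FDRep.cp ρ' (s * s)) ↔
      Nonempty (FDRep.dsum (symSq ρ) (altSq ρ') ≅ FDRep.dsum (symSq ρ') (altSq ρ)) := by
  have hrr : finrank ℂ ρ = finrank ℂ ρ' := by rw [hr, hr']
  constructor
  · intro hcp
    cases nonempty_fintype G
    apply iso_of_char_eq
    intro g
    have hS1 := (char_symSq_altSq ρ g).2
    have hS2 := (char_symSq_altSq ρ' g).2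
    have hE : ρ.character (g * g) = ρ'.character (g * g) :=
      char_eq_of_cp_eq (g * g) hrr (hcp g)
    rw [char_dsum, char_dsum]
    linear_combination hS1 - hS2 + hE
  · rintro ⟨i⟩ s
    have hAB : ∀ g : G, (FDRep.dsum (symSq ρ) (altSq ρ')).character g
        = (FDRep.dsum (symSq ρ') (altSq ρ)).character g :=
      fun g => congrFun (FDRep.char_iso i) g
    have htr : ∀ t : G, ρ.character (t * t) = ρ'.character (t * t) := by
      intro t
      have hS1 := (char_symSq_altSq ρ t).2
      have hS2 := (char_symSq_altSq ρ' t).2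
      have h3 := hAB t
      rw [char_dsum, char_dsum] at h3
      linear_combination -hS1 + hS2 + h3
    set H : Subgroup G := Subgroup.zpowers (s * s) with hH
    have hsq : ∀ h : H, ∃ t : G, (h : G) = t * t := by
      rintro ⟨x, hx⟩
      obtain ⟨k, hk⟩ := Subgroup.mem_zpowers_iff.mp hx
      refine ⟨s ^ k, ?_⟩
      show x = s ^ k * s ^ k
      rw [← hk, sq_zpow]
    have hresχ : ∀ h : ↥H, (FDRep.res H ρ).character h = (FDRep.res H ρ').character h := by
      intro h
      obtain ⟨t, ht⟩ := hsq h
      show ρ.character (h : G) = ρ'.character (h : G)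
      have := htr t
      rw [← ht] at this
      exact this
    cases nonempty_fintype ↥H
    obtain ⟨j⟩ := iso_of_char_eq (FDRep.res H ρ) (FDRep.res H ρ') hresχ
    set h0 : ↥H := ⟨s * s, Subgroup.mem_zpowers _⟩ with hh0
    have hconj : (FDRep.res H ρ').ρ h0
        = (FDRep.isoToLinearEquiv j).conj ((FDRep.res H ρ).ρ h0) := FDRep.Iso.conj_ρ j h0
    have h1 : FDRep.cp ρ' (s * s) = LinearMap.charpoly ((FDRep.res H ρ').ρ h0) := rfl
    have h2 : FDRep.cp ρ (s * s) = LinearMap.charpoly ((FDRep.res H ρ).ρ h0) := rfl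
    rw [h1, h2, hconj, LinearEquiv.charpoly_conj]
end

section
/- Let G be the group with GAP identifier ⟨48,3⟩ and let ρ, ρ' be two nonisomorphic faithful irreducible 3-dimensional complex representations of G. Then for every s ∈ G, the matrices ρ(s²) and ρ'(s²) have the same characteristic polynomial, yet ρ and ρ' are not polyquadratic twists (there is no quadratic character χ of G with ρ' ≅ χ ⊗ ρ, and since ρ is irreducible, no finer decomposition exists). -/
open CategoryTheory Module Polynomial

variable {G : Type} [Group G]

abbrev N48 := Multiplicative (ZMod 4 × ZMod 4)

/-- The order-3 automorphism `(a, b) ↦ (b, -a-b)` of `(ℤ/4)²`. -/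
def cycAut : MulAut N48 :=
  AddEquiv.toMultiplicative
    { toFun := fun p => (p.2, -p.1 - p.2)
      invFun := fun p => (-p.1 - p.2, p.1)
      left_inv := by decide
      right_inv := by decide
      map_add' := by decide }

lemma cycAut_cube : cycAut ^ 3 = 1 := by
  ext p <;> revert p <;> decide

/-- The action of `ℤ/3` on `(ℤ/4)²` through `cycAut`. -/
def phi48 : Multiplicative (ZMod 3) →* MulAut N48 :=
  AddMonoidHom.toMultiplicativeLeft
    (ZMod.lift 3 ⟨zmultiplesHom (Additive (MulAut N48)) (Additive.ofMul cycAut), by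
      rw [zmultiplesHom_apply, natCast_zsmul]; exact congrArg Additive.ofMul cycAut_cube⟩)

/-- The group with GAP identifier ⟨48,3⟩, presented as `(C₄ × C₄) ⋊ C₃`. -/
abbrev G48 := N48 ⋊[phi48] Multiplicative (ZMod 3)

open Multiplicative

instance : Fintype G48 :=
  Fintype.ofEquiv (N48 × Multiplicative (ZMod 3))
    ⟨fun p => ⟨p.1, p.2⟩, fun g => (g.left, g.right), fun _ => rfl, fun _ => rfl⟩

-- group identities
lemma g48_mul_n (g : G48) (n : N48) : g * ⟨n, 1⟩ = (⟨phi48 g.right n, 1⟩ : G48) * g := by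
  ext1
  · simp [SemidirectProduct.mul_left, mul_comm]
  · simp

lemma g48_conj (h : N48) (g : G48) :
    (⟨h,1⟩ : G48) * g * (⟨h,1⟩ : G48)⁻¹ = ⟨h * g.left * (phi48 g.right h)⁻¹, g.right⟩ := by
  ext1
  · simp [SemidirectProduct.mul_left, SemidirectProduct.inv_left, mul_assoc]
  · simp

lemma g48_decomp (g : G48) : g = (⟨g.left, 1⟩ : G48) * ⟨1, g.right⟩ := by
  ext <;> simp

open CategoryTheory

section rep
variable (V : FDRep ℂ G48)

lemma aux_schur [Simple V] (hf : Function.Injective V.ρ) (P : V →ₗ[ℂ] V)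
    (hcomm : ∀ g : G48, P ∘ₗ V.ρ g = V.ρ g ∘ₗ P)
    (g₀ : G48) (hg₀ : g₀ ≠ 1) (habs : V.ρ g₀ ∘ₗ P = P) : P = 0 := by
  by_contra hP
  let f : V ⟶ V := ⟨FGModuleCat.ofHom P, fun g => by
    ext v
    change P (V.ρ g v) = V.ρ g (P v)
    exact congrFun (congrArg DFunLike.coe (hcomm g)) v⟩
  have hne : f ≠ 0 := fun h => hP (by
    have := congrArg (fun f : V ⟶ V => f.hom.hom.hom) h
    simp [f] at this
    exact this)
  haveI : IsIso f := isIso_of_hom_simple hne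
  have hsurj : Function.Surjective P := by
    have h := congrArg Action.Hom.hom (IsIso.inv_hom_id f)
    intro v
    exact ⟨(CategoryTheory.inv f).hom.hom.hom v, congrFun (congrArg (fun f : V ⟶ V => ⇑f.hom.hom.hom) (IsIso.inv_hom_id f)) v⟩
  apply hg₀
  apply hf
  rw [map_one]
  ext v
  obtain ⟨w, rfl⟩ := hsurj v
  have := congrFun (congrArg DFunLike.coe habs) w
  simpa using this

lemma PN_zero [Simple V] (hf : Function.Injective V.ρ) :
    ∑ n : N48, V.ρ (⟨n, 1⟩ : G48) = 0 := by
  have key : ∀ (m n : N48), (⟨m, 1⟩ : G48) * ⟨n,1⟩ = ⟨m * n, 1⟩ := by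
    intro m n; ext1
    · simp [SemidirectProduct.mul_left]
    · simp
  apply aux_schur V hf _ _ (⟨ofAdd (1,0), 1⟩ : G48) (by decide)
  · -- habs
    show V.ρ _ * (∑ n : N48, V.ρ (⟨n,1⟩:G48)) = ∑ n : N48, V.ρ (⟨n,1⟩:G48)
    rw [Finset.mul_sum]
    apply Fintype.sum_equiv (Equiv.mulLeft (ofAdd ((1:ZMod 4),(0:ZMod 4))))
      (fun n => V.ρ (⟨ofAdd (1,0),1⟩:G48) * V.ρ (⟨n,1⟩:G48)) (fun n => V.ρ (⟨n,1⟩:G48))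
    intro n
    rw [← map_mul, key]
    rfl
  · -- hcomm
    intro g
    show (∑ n : N48, V.ρ (⟨n,1⟩:G48)) * V.ρ g = V.ρ g * (∑ n : N48, V.ρ (⟨n,1⟩:G48))
    rw [Finset.sum_mul, Finset.mul_sum]
    apply Fintype.sum_equiv (phi48 g.right).toEquiv.symm
      (fun n => V.ρ (⟨n,1⟩:G48) * V.ρ g) (fun n => V.ρ g * V.ρ (⟨n,1⟩:G48))
    intro n
    rw [← map_mul, ← map_mul, g48_mul_n]
    simp

lemma g48_conj2 (t : Multiplicative (ZMod 3)) (n : N48) :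
    (⟨1,t⟩ : G48) * ⟨n,1⟩ * (⟨1,t⟩ : G48)⁻¹ = ⟨phi48 t n, 1⟩ := by
  ext1
  · simp [SemidirectProduct.mul_left, SemidirectProduct.inv_left]
  · simp

lemma PK_zero [Simple V] (hf : Function.Injective V.ρ) :
    V.ρ 1 + V.ρ (⟨ofAdd (2,0), 1⟩ : G48) + V.ρ (⟨ofAdd (0,2), 1⟩ : G48)
      + V.ρ (⟨ofAdd (2,2), 1⟩ : G48) = 0 := by
  have hswap : ∀ (g : G48) (k : N48),
      V.ρ g * V.ρ (⟨k,1⟩:G48) = V.ρ (⟨phi48 g.right k,1⟩:G48) * V.ρ g := fun g k => by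
    rw [← map_mul, ← map_mul, g48_mul_n]
  apply aux_schur V hf _ _ (⟨ofAdd (2,0), 1⟩ : G48) (by decide)
  · -- habs
    show V.ρ (⟨ofAdd (2,0), 1⟩ : G48) * _ = _
    rw [mul_add, mul_add, mul_add]
    rw [show (V.ρ (⟨ofAdd (2,0), 1⟩ : G48) * V.ρ 1) = V.ρ (⟨ofAdd (2,0), 1⟩ : G48) by
      rw [map_one, mul_one]]
    rw [← map_mul, ← map_mul, ← map_mul]
    rw [show ((⟨ofAdd (2,0), 1⟩ : G48) * ⟨ofAdd (2,0), 1⟩) = 1 by decide]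
    rw [show ((⟨ofAdd (2,0), 1⟩ : G48) * ⟨ofAdd (0,2), 1⟩) = (⟨ofAdd (2,2), 1⟩ : G48) by decide]
    rw [show ((⟨ofAdd (2,0), 1⟩ : G48) * ⟨ofAdd (2,2), 1⟩) = (⟨ofAdd (0,2), 1⟩ : G48) by decide]
    abel
  · -- hcomm
    intro g
    show _ * V.ρ g = V.ρ g * _
    rw [add_mul, add_mul, add_mul, mul_add, mul_add, mul_add]
    rw [hswap g (ofAdd (2,0)), hswap g (ofAdd (0,2)), hswap g (ofAdd (2,2))]
    rw [map_one, one_mul, mul_one]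
    have key4 : ∀ t : Multiplicative (ZMod 3),
        (phi48 t (ofAdd (2,0)) = ofAdd (2,0) ∧ phi48 t (ofAdd (0,2)) = ofAdd (0,2)
          ∧ phi48 t (ofAdd (2,2)) = ofAdd (2,2)) ∨
        (phi48 t (ofAdd (2,0)) = ofAdd (0,2) ∧ phi48 t (ofAdd (0,2)) = ofAdd (2,2)
          ∧ phi48 t (ofAdd (2,2)) = ofAdd (2,0)) ∨
        (phi48 t (ofAdd (2,0)) = ofAdd (2,2) ∧ phi48 t (ofAdd (0,2)) = ofAdd (2,0)
          ∧ phi48 t (ofAdd (2,2)) = ofAdd (0,2)) := by decide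
    rcases key4 g.right with ⟨h0,h1,h2⟩|⟨h0,h1,h2⟩|⟨h0,h1,h2⟩ <;> rw [h0,h1,h2] <;> abel

lemma trace_conj (a g : G48) :
    LinearMap.trace ℂ V (V.ρ (a * g * a⁻¹)) = LinearMap.trace ℂ V (V.ρ g) := by
  rw [show a * g * a⁻¹ = a * (g * a⁻¹) by group, map_mul, LinearMap.trace_mul_comm,
    ← map_mul]
  congr 1
  congr 1
  group

lemma trace_right_ne [Simple V] (hf : Function.Injective V.ρ) (g : G48)
    (hg : g.right ≠ 1) : LinearMap.trace ℂ V (V.ρ g) = 0 := by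
  have key1 : ∀ (t : Multiplicative (ZMod 3)), t ≠ 1 → ∀ d : N48,
      ∃ h : N48, h * ((phi48 t) h)⁻¹ = d := by decide
  have hmul : ∀ n : N48, (⟨n,1⟩ : G48) * ⟨1, g.right⟩ = ⟨n, g.right⟩ := by
    intro n; ext1
    · simp [SemidirectProduct.mul_left]
    · simp
  have hsum : ∑ n : N48, V.ρ (⟨n, g.right⟩ : G48) = 0 := by
    calc ∑ n : N48, V.ρ (⟨n, g.right⟩ : G48)
        = (∑ n : N48, V.ρ (⟨n, 1⟩ : G48)) * V.ρ (⟨1, g.right⟩ : G48) := by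
          rw [Finset.sum_mul]
          exact Finset.sum_congr rfl fun n _ => by rw [← map_mul, hmul]
      _ = 0 := by rw [PN_zero V hf, zero_mul]
  have hconst : ∀ n : N48,
      LinearMap.trace ℂ V (V.ρ (⟨n, g.right⟩ : G48)) = LinearMap.trace ℂ V (V.ρ g) := by
    intro n
    obtain ⟨h, hh⟩ := key1 g.right hg (n * g.left⁻¹)
    have hc : (⟨h,1⟩ : G48) * g * (⟨h,1⟩ : G48)⁻¹ = ⟨n, g.right⟩ := by
      rw [g48_conj]
      congr 1
      rw [mul_right_comm, hh]
      group
    rw [← hc, trace_conj]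
  have := congrArg (LinearMap.trace ℂ V) hsum
  rw [map_sum, map_zero] at this
  rw [Finset.sum_congr rfl (fun n _ => hconst n)] at this
  simp only [Finset.sum_const, Finset.card_univ] at this
  rw [show Fintype.card N48 = 16 from rfl] at this
  rw [nsmul_eq_mul] at this
  rcases mul_eq_zero.mp this with h | h
  · norm_num at h
  · exact h

lemma trace_invol [Simple V] (hf : Function.Injective V.ρ) (hfr : finrank ℂ V = 3)
    (m : N48) (hm1 : m ≠ 1) (hm2 : m * m = 1) :
    LinearMap.trace ℂ V (V.ρ (⟨m,1⟩ : G48)) = -1 := by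
  have key3 : ∀ m : N48, m ≠ 1 → m*m = 1 → ∃ t, phi48 t (ofAdd (2,0)) = m := by decide
  have hconj : ∀ n : N48, ∀ t, phi48 t (ofAdd (2,0)) = n →
      LinearMap.trace ℂ V (V.ρ (⟨n,1⟩ : G48))
        = LinearMap.trace ℂ V (V.ρ (⟨ofAdd (2,0),1⟩ : G48)) := by
    intro n t ht
    rw [← ht, ← g48_conj2, trace_conj]
  have h1 : LinearMap.trace ℂ V (V.ρ (⟨ofAdd (0,2),1⟩ : G48))
      = LinearMap.trace ℂ V (V.ρ (⟨ofAdd (2,0),1⟩ : G48)) :=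
    hconj _ (ofAdd 1) (by decide)
  have h2 : LinearMap.trace ℂ V (V.ρ (⟨ofAdd (2,2),1⟩ : G48))
      = LinearMap.trace ℂ V (V.ρ (⟨ofAdd (2,0),1⟩ : G48)) :=
    hconj _ (ofAdd 2) (by decide)
  have hsum := congrArg (LinearMap.trace ℂ V) (PK_zero V hf)
  rw [map_add, map_add, map_add, map_zero, map_one, LinearMap.trace_one, h1, h2, hfr] at hsum
  obtain ⟨t, ht⟩ := key3 m hm1 hm2
  rw [hconj m t ht]
  push_cast at hsum
  linear_combination hsum / 3
end rep

section charpoly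
open Matrix

lemma matrix_cp_gen (A : Matrix (Fin 3) (Fin 3) ℂ) (t e : ℂ)
    (h1 : A.trace = t)
    (h5 : A 0 0 * A 1 1 - A 0 1 * A 1 0 + (A 0 0 * A 2 2 - A 0 2 * A 2 0)
      + (A 1 1 * A 2 2 - A 1 2 * A 2 1) = e) :
    A.charpoly = X^3 - C t * X^2 + C e * X - C A.det := by
  have e1 : A 0 0 + A 1 1 + A 2 2 = t := by
    simpa [Matrix.trace_fin_three] using h1
  have c1 := congrArg C e1
  have c5 := congrArg C h5
  simp only [map_add, map_sub, _root_.map_mul] at c1 c5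
  rw [Matrix.charpoly, Matrix.det_fin_three, Matrix.det_fin_three]
  simp only [charmatrix_apply_eq, charmatrix_apply_ne _ _ _ (by decide : (0:Fin 3) ≠ 1),
    charmatrix_apply_ne _ _ _ (by decide : (0:Fin 3) ≠ 2),
    charmatrix_apply_ne _ _ _ (by decide : (1:Fin 3) ≠ 0),
    charmatrix_apply_ne _ _ _ (by decide : (1:Fin 3) ≠ 2),
    charmatrix_apply_ne _ _ _ (by decide : (2:Fin 3) ≠ 0),
    charmatrix_apply_ne _ _ _ (by decide : (2:Fin 3) ≠ 1), map_sub, map_add, _root_.map_mul]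
  linear_combination X * c5 - X^2 * c1

lemma endo_cp_gen {W : Type} [AddCommGroup W] [Module ℂ W] [FiniteDimensional ℂ W]
    (hfr : finrank ℂ W = 3) (M : Module.End ℂ W) (t p : ℂ)
    (h1 : LinearMap.trace ℂ W M = t) (h2 : LinearMap.trace ℂ W (M*M) = p) :
    LinearMap.charpoly M = X^3 - C t * X^2 + C ((t^2 - p)/2) * X - C (LinearMap.det M) := by
  let b : Basis (Fin 3) ℂ W := Module.finBasisOfFinrankEq ℂ W hfr
  rw [← LinearMap.charpoly_toMatrix (f := M) b, ← LinearMap.det_toMatrix b M]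
  set A := LinearMap.toMatrix b b M with hA
  have e1 : A.trace = t := by
    rw [← LinearMap.trace_eq_matrix_trace ℂ b M] at *; exact h1
  have e2 : (A*A).trace = p := by
    rw [hA, ← LinearMap.toMatrix_mul b, ← LinearMap.trace_eq_matrix_trace ℂ b]; exact h2
  apply matrix_cp_gen A t _ e1
  have e1' : A 0 0 + A 1 1 + A 2 2 = t := by
    simpa [Matrix.trace_fin_three] using e1
  have e2' : A 0 0 * A 0 0 + A 0 1 * A 1 0 + A 0 2 * A 2 0
      + (A 1 0 * A 0 1 + A 1 1 * A 1 1 + A 1 2 * A 2 1)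
      + (A 2 0 * A 0 2 + A 2 1 * A 1 2 + A 2 2 * A 2 2) = p := by
    simpa [Matrix.trace_fin_three, Matrix.mul_apply, Fin.sum_univ_three] using e2
  linear_combination ((A 0 0 + A 1 1 + A 2 2) + t)/2 * e1' - (1/2 : ℂ) * e2'

lemma cp_cube {W : Type} [AddCommGroup W] [Module ℂ W] [FiniteDimensional ℂ W]
    (hfr : finrank ℂ W = 3) (M : Module.End ℂ W) (h3 : M^3 = 1)
    (h1 : LinearMap.trace ℂ W M = 0) (h2 : LinearMap.trace ℂ W (M*M) = 0) :
    LinearMap.charpoly M = X^3 - 1 := by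
  have hc := endo_cp_gen hfr M 0 0 h1 h2
  norm_num at hc
  have hch := LinearMap.aeval_self_charpoly M
  rw [hc] at hch
  simp only [map_sub, map_pow, aeval_X, aeval_C] at hch
  rw [h3, sub_eq_zero] at hch
  have : Nontrivial W := Module.nontrivial_of_finrank_pos (by omega : 0 < finrank ℂ W)
  have hdet : LinearMap.det M = 1 :=
    (algebraMap ℂ (Module.End ℂ W)).injective (by simpa using hch.symm)
  rw [hc, hdet, Polynomial.C_1]

lemma cp_invol {W : Type} [AddCommGroup W] [Module ℂ W] [FiniteDimensional ℂ W]
    (hfr : finrank ℂ W = 3) (M : Module.End ℂ W) (h2 : M*M = 1)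
    (h1 : LinearMap.trace ℂ W M = -1) :
    LinearMap.charpoly M = X^3 + X^2 - X - 1 := by
  have htr2 : LinearMap.trace ℂ W (M*M) = 3 := by
    rw [h2, LinearMap.trace_one, hfr]; norm_num
  have hc := endo_cp_gen hfr M (-1) 3 h1 htr2
  norm_num at hc
  have hch := LinearMap.aeval_self_charpoly M
  rw [hc] at hch
  have : Nontrivial W := Module.nontrivial_of_finrank_pos (by omega : 0 < finrank ℂ W)
  have hM3 : M^3 = M := by
    rw [pow_succ, pow_two, h2, one_mul]
  have hM2 : M^2 = 1 := by rw [pow_two, h2]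
  simp only [map_add, map_sub, map_pow, map_neg, aeval_X, aeval_C] at hch
  rw [hM3, hM2] at hch
  have hch' : algebraMap ℂ (Module.End ℂ W) (LinearMap.det M) = algebraMap ℂ _ 1 := by
    have h0 : (1 : Module.End ℂ W) - algebraMap ℂ _ (LinearMap.det M) = 0 := by
      rw [← hch]; abel
    rw [sub_eq_zero] at h0
    simpa using h0.symm
  have hdet : LinearMap.det M = 1 := (algebraMap ℂ (Module.End ℂ W)).injective hch'
  rw [hc, hdet]
  norm_num
  ring

lemma cp_one {W : Type} [AddCommGroup W] [Module ℂ W] [FiniteDimensional ℂ W]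
    (hfr : finrank ℂ W = 3) :
    LinearMap.charpoly (1 : Module.End ℂ W) = X^3 - C 3 * X^2 + C 3 * X - C 1 := by
  have htr : LinearMap.trace ℂ W 1 = 3 := by rw [LinearMap.trace_one, hfr]; norm_num
  have hc := endo_cp_gen hfr 1 3 3 htr (by rw [one_mul]; exact htr)
  rw [show LinearMap.det (1 : Module.End ℂ W) = 1 from LinearMap.det_id] at hc
  rw [hc]
  norm_num

end charpoly

-- quadratic characters of G48 are trivial
lemma quad_char_trivial (χ : G48 →* ℂˣ) (hq : IsQuadraticChar χ) : χ = 1 := by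
  have hN : ∀ n : N48, χ (⟨n,1⟩ : G48) = 1 := by
    intro n
    have key : ∀ n : N48, ∃ h : N48, h * (phi48 (ofAdd 1) h)⁻¹ = n := by decide
    obtain ⟨h, hh⟩ := key n
    have hcomm : (⟨h,1⟩ : G48) * ⟨1, ofAdd 1⟩ * (⟨h,1⟩ : G48)⁻¹ * (⟨1, ofAdd 1⟩ : G48)⁻¹
        = ⟨n, 1⟩ := by
      have h1 : (⟨h,1⟩ : G48) * ⟨1, ofAdd 1⟩ * (⟨h,1⟩ : G48)⁻¹
          = ⟨h * (phi48 (ofAdd 1) h)⁻¹, ofAdd 1⟩ := by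
        rw [show ((⟨h,1⟩ : G48) * ⟨1, ofAdd 1⟩) = (⟨h, ofAdd 1⟩ : G48) by
          ext1
          · simp [SemidirectProduct.mul_left]
          · simp]
        ext1
        · simp [SemidirectProduct.mul_left, SemidirectProduct.inv_left, mul_assoc]
        · simp
      rw [h1, hh]
      ext1
      · simp [SemidirectProduct.mul_left, SemidirectProduct.inv_left]
      · simp
    rw [← hcomm]
    simp only [map_mul, map_inv]
    rw [mul_comm (χ (⟨h,1⟩ : G48)) (χ (⟨1, ofAdd 1⟩ : G48))]
    group
  ext g
  have hg := g48_decomp g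
  have hC : χ (⟨1, g.right⟩ : G48) = 1 := by
    have hcube : (⟨1, g.right⟩ : G48)^3 = 1 := by
      have h : ∀ t : Multiplicative (ZMod 3), ((⟨1, t⟩ : G48))^3 = 1 := by decide
      exact h g.right
    have h3 : χ (⟨1, g.right⟩ : G48)^3 = 1 := by rw [← map_pow, hcube, map_one]
    have h2 : χ (⟨1, g.right⟩ : G48)^2 = 1 := by rw [pow_two]; exact hq _
    calc χ (⟨1, g.right⟩ : G48) = χ (⟨1, g.right⟩ : G48)^3 * (χ (⟨1, g.right⟩ : G48)^2)⁻¹ := by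
          group
      _ = 1 := by rw [h3, h2]; group
  rw [hg, map_mul, hN, hC, one_mul]
  rfl

noncomputable def twistEqOneIso (χ : G →* ℂˣ) (h : χ = 1) (V : FDRep ℂ G) :
    FDRep.twist χ V ≅ V := by
  subst h
  exact Action.mkIso (Iso.refl _) (fun g => by
    ext v
    show ((1:ℂˣ) : ℂ) • (V.ρ g v) = V.ρ g v
    simp)

noncomputable def dsumFinCongr {t : ℕ} {W W' : Fin t → FDRep ℂ G} (e : ∀ i, W i ≅ W' i) :
    FDRep.dsumFin W ≅ FDRep.dsumFin W' :=
  Action.mkIso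
    (LinearEquiv.toFGModuleCatIso
      (LinearEquiv.piCongrRight fun i => FDRep.isoToLinearEquiv (e i)))
    (fun g => by
      ext v
      funext i
      show FDRep.isoToLinearEquiv (e i) ((W i).ρ g (v i))
        = (W' i).ρ g (FDRep.isoToLinearEquiv (e i) (v i))
      exact congrFun (congrArg (fun (f : _ ⟶ _) => (f : _ → _)) ((e i).hom.comm g)) (v i))

/-- For the group `⟨48,3⟩ = (C₄ × C₄) ⋊ C₃`, any two nonisomorphic faithful irreducible
3-dimensional representations `ρ, ρ'` satisfy that `ρ(s²)` and `ρ'(s²)` have the same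
characteristic polynomial for every `s`, yet `ρ` and `ρ'` are not polyquadratic
twists. -/
theorem stmt8 (ρ ρ' : FDRep ℂ G48)
    (h3 : finrank ℂ ρ = 3) (h3' : finrank ℂ ρ' = 3)
    (hs : Simple ρ) (hs' : Simple ρ')
    (hfaith : Function.Injective ρ.ρ) (hfaith' : Function.Injective ρ'.ρ)
    (hniso : ¬ Nonempty (ρ ≅ ρ')) :
    (∀ s : G48, FDRep.cp ρ (s * s) = FDRep.cp ρ' (s * s)) ∧
    ¬ IsPolyquadraticTwist ρ ρ' := by
  haveI := hs
  haveI := hs'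
  constructor
  · -- charpoly part
    intro s
    show LinearMap.charpoly (ρ.ρ (s*s)) = LinearMap.charpoly (ρ'.ρ (s*s))
    by_cases ht : s.right = 1
    · have hss : s * s = (⟨s.left * s.left, 1⟩ : G48) := by
        ext1
        · rw [SemidirectProduct.mul_left, ht, map_one]; rfl
        · rw [SemidirectProduct.mul_right, ht, mul_one]
      by_cases hm : s.left * s.left = 1
      · have h1 : s * s = 1 := by rw [hss, hm]; rfl
        rw [h1, map_one, map_one, cp_one h3, cp_one h3']
      · have hmm : (s.left * s.left) * (s.left * s.left) = 1 := by
          have : ∀ n : N48, (n*n)*(n*n) = 1 := by decide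
          exact this s.left
        have hsq : (s*s) * (s*s) = 1 := by
          rw [hss]
          rw [show ((⟨s.left * s.left, 1⟩ : G48) * ⟨s.left * s.left, 1⟩)
            = (⟨(s.left * s.left) * (s.left * s.left), 1⟩ : G48) by
              ext1
              · rw [SemidirectProduct.mul_left, map_one]; rfl
              · rw [SemidirectProduct.mul_right, mul_one]]
          rw [hmm]; rfl
        have cp1 := cp_invol h3 (ρ.ρ (s*s)) (by rw [← map_mul, hsq, map_one])
          (by rw [hss]; exact trace_invol ρ hfaith h3 _ hm hmm)
        have cp2 := cp_invol h3' (ρ'.ρ (s*s)) (by rw [← map_mul, hsq, map_one])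
          (by rw [hss]; exact trace_invol ρ' hfaith' h3' _ hm hmm)
        rw [cp1, cp2]
    · have hsst : (s*s).right ≠ 1 := by
        rw [SemidirectProduct.mul_right]
        have : ∀ t : Multiplicative (ZMod 3), t ≠ 1 → t*t ≠ 1 := by decide
        exact this s.right ht
      have h4t : ((s*s)*(s*s)).right ≠ 1 := by
        rw [SemidirectProduct.mul_right]
        exact (by decide : ∀ t : Multiplicative (ZMod 3), t ≠ 1 → t*t ≠ 1) _ hsst
      have hcube : (s*s)^3 = 1 := by
        have : ∀ g : G48, g.right ≠ 1 → g^3 = 1 := by decide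
        exact this _ hsst
      have cp1 := cp_cube h3 (ρ.ρ (s*s)) (by rw [← map_pow, hcube, map_one])
        (trace_right_ne ρ hfaith _ hsst)
        (by rw [← map_mul]; exact trace_right_ne ρ hfaith _ h4t)
      have cp2 := cp_cube h3' (ρ'.ρ (s*s)) (by rw [← map_pow, hcube, map_one])
        (trace_right_ne ρ' hfaith' _ hsst)
        (by rw [← map_mul]; exact trace_right_ne ρ' hfaith' _ h4t)
      rw [cp1, cp2]
  · -- not polyquadratic twists
    rintro ⟨t, W, χ, hq, ⟨e⟩, ⟨e'⟩⟩
    have hχ : ∀ i, χ i = 1 := fun i => quad_char_trivial (χ i) (hq i)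
    exact hniso ⟨e ≪≫ (dsumFinCongr fun i => twistEqOneIso (χ i) (hχ i) (W i)).symm ≪≫ e'.symm⟩
end

section
/- Let G be a finite group and ρ, ρ' : G → GL_2(ℂ) semisimple representations such that for every s ∈ G the characteristic polynomials of ρ(s²) and ρ'(s²) coincide, and suppose the quadratic character ε = det(ρ')/det(ρ) is nontrivial. Then both ρ and ρ' are reducible; in fact the multiplicity of the trivial representation in ad⁰(ρ') = (ρ' ⊗ ρ'∨) ⊖ 1 is at least 1. -/
open CategoryTheory Module Polynomial

variable {G : Type} [Group G]

/-- A representation is reducible if it has a nontrivial proper invariant subspace. -/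
def FDRep.Reducible (V : FDRep ℂ G) : Prop :=
  ∃ p : Submodule ℂ V, (∀ s : G, ∀ x ∈ p, V.ρ s x ∈ p) ∧ p ≠ ⊥ ∧ p ≠ ⊤

namespace Stmt12Aux

open LinearMap Module TensorProduct

variable {W : Type} [AddCommGroup W] [Module ℂ W] [FiniteDimensional ℂ W]

/-! ### Matrix lemmas in dimension 2 -/

lemma mtrace_sq (M : Matrix (Fin 2) (Fin 2) ℂ) :
    (M * M).trace = M.trace ^ 2 - 2 * M.det := by
  simp [Matrix.trace_fin_two, Matrix.mul_apply, Matrix.det_fin_two, Fin.sum_univ_two]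
  ring

lemma mtrace_inv {M N : Matrix (Fin 2) (Fin 2) ℂ} (h : M * N = 1) :
    M.det * N.trace = M.trace := by
  have hdet : M.det * N.det = 1 := by rw [← Matrix.det_mul, h, Matrix.det_one]
  have hM : IsUnit M.det := IsUnit.of_mul_eq_one _ hdet
  have hN : N = M⁻¹ := (Matrix.inv_eq_right_inv h).symm
  subst hN
  rw [Matrix.inv_def, Matrix.trace_smul, Matrix.adjugate_fin_two, smul_eq_mul, ← mul_assoc,
    Ring.mul_inverse_cancel _ hM, one_mul]
  simp [Matrix.trace_fin_two]
  ring

/-! ### Endomorphism lemmas in dimension 2 -/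

lemma end_trace_sq (hW : finrank ℂ W = 2) (A : Module.End ℂ W) :
    trace ℂ W (A * A) = trace ℂ W A ^ 2 - 2 * LinearMap.det A := by
  classical
  let b := Module.finBasisOfFinrankEq ℂ W hW
  rw [trace_eq_matrix_trace ℂ b, trace_eq_matrix_trace ℂ b, ← LinearMap.det_toMatrix b,
    LinearMap.toMatrix_mul]
  exact mtrace_sq _

lemma end_trace_inv (hW : finrank ℂ W = 2) {A B : Module.End ℂ W} (hAB : A * B = 1) :
    LinearMap.det A * trace ℂ W B = trace ℂ W A := by
  classical
  let b := Module.finBasisOfFinrankEq ℂ W hW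
  rw [trace_eq_matrix_trace ℂ b, trace_eq_matrix_trace ℂ b, ← LinearMap.det_toMatrix b]
  apply mtrace_inv
  rw [← LinearMap.toMatrix_mul, hAB, LinearMap.toMatrix_one]

lemma end_trace_cp (hW : finrank ℂ W = 2) (A : Module.End ℂ W) :
    trace ℂ W A = -(LinearMap.charpoly A).coeff 1 := by
  classical
  let b := Module.finBasisOfFinrankEq ℂ W hW
  rw [trace_eq_matrix_trace ℂ b, Matrix.trace_eq_neg_charpoly_coeff,
    LinearMap.charpoly_toMatrix A b]
  norm_num

lemma end_det_cp (hW : finrank ℂ W = 2) (A : Module.End ℂ W) :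
    LinearMap.det A = (LinearMap.charpoly A).coeff 0 := by
  classical
  let b := Module.finBasisOfFinrankEq ℂ W hW
  rw [← LinearMap.det_toMatrix b, Matrix.det_eq_sign_charpoly_coeff,
    LinearMap.charpoly_toMatrix A b]
  norm_num

/-! ### The trace of the conjugation operator on `End` -/

noncomputable def conjMap (a b : Module.End ℂ W) : Module.End ℂ (Module.End ℂ W) where
  toFun f := a * f * b
  map_add' f g := by simp only [mul_add, add_mul]
  map_smul' c f := by simp only [RingHom.id_apply, mul_smul_comm, smul_mul_assoc]

@[simp] lemma conjMap_apply (a b f : Module.End ℂ W) : conjMap a b f = a * f * b := rfl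

lemma trace_conjMap (a b : Module.End ℂ W) :
    trace ℂ (Module.End ℂ W) (conjMap a b) = trace ℂ W a * trace ℂ W b := by
  classical
  set e := dualTensorHomEquiv ℂ W W with he
  set T := TensorProduct.map (Module.Dual.transpose (R := ℂ) b) a with hT
  have key : ∀ x : Module.Dual ℂ W ⊗[ℂ] W,
      conjMap a b (dualTensorHom ℂ W W x) = dualTensorHom ℂ W W (T x) := by
    intro x
    induction x using TensorProduct.induction_on with
    | zero => simp
    | tmul g v =>
      ext y
      simp [conjMap_apply, Module.End.mul_apply, hT, Module.Dual.transpose_apply]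
    | add x y hx hy => simp only [map_add, hx, hy]
  have happ : ∀ x, e x = dualTensorHom ℂ W W x := by
    intro x
    rw [he]
    simp [dualTensorHomEquiv]
  have hconj : conjMap a b = e.conj T := by
    apply LinearMap.ext
    intro f
    rw [LinearEquiv.conj_apply]
    simp only [LinearMap.coe_comp, LinearEquiv.coe_coe, Function.comp_apply]
    rw [happ, ← key, ← happ, e.apply_symm_apply]
  rw [hconj, trace_conj', hT, trace_tensorProduct', trace_transpose', mul_comm]

/-! ### The commutant and the averaging projector -/

section Commutant

variable {K : Type} [Group K]

def commutant (r : K →* Module.End ℂ W) : Submodule ℂ (Module.End ℂ W) where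
  carrier := {f | ∀ s : K, r s * f = f * r s}
  add_mem' := fun hf hg s => by rw [mul_add, add_mul, hf s, hg s]
  zero_mem' := fun s => by rw [mul_zero, zero_mul]
  smul_mem' := fun c f hf s => by rw [mul_smul_comm, smul_mul_assoc, hf s]

lemma mem_commutant {r : K →* Module.End ℂ W} {f : Module.End ℂ W} :
    f ∈ commutant r ↔ ∀ s : K, r s * f = f * r s := Iff.rfl

lemma r_mul_r_inv (r : K →* Module.End ℂ W) (s : K) : r s * r s⁻¹ = 1 := by
  rw [← map_mul, mul_inv_cancel, map_one]

lemma r_inv_mul_r (r : K →* Module.End ℂ W) (s : K) : r s⁻¹ * r s = 1 := by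
  rw [← map_mul, inv_mul_cancel, map_one]

variable [Fintype K]

noncomputable def avgProj (r : K →* Module.End ℂ W) : Module.End ℂ (Module.End ℂ W) :=
  (Fintype.card K : ℂ)⁻¹ • ∑ s : K, conjMap (r s) (r s⁻¹)

lemma avgProj_apply (r : K →* Module.End ℂ W) (f : Module.End ℂ W) :
    avgProj r f = (Fintype.card K : ℂ)⁻¹ • ∑ s : K, r s * f * r s⁻¹ := by
  simp [avgProj, LinearMap.sum_apply]

lemma avgProj_mem (r : K →* Module.End ℂ W) (f : Module.End ℂ W) :
    avgProj r f ∈ commutant r := by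
  rw [mem_commutant]
  intro t
  rw [avgProj_apply, mul_smul_comm, smul_mul_assoc, Finset.mul_sum, Finset.sum_mul]
  congr 1
  refine Fintype.sum_equiv (Equiv.mulLeft t) _ _ (fun s => ?_)
  have h1 : r t⁻¹ * r t = 1 := r_inv_mul_r r t
  simp only [Equiv.coe_mulLeft, mul_inv_rev, map_mul]
  simp only [mul_assoc, h1, mul_one]

lemma avgProj_fixed (r : K →* Module.End ℂ W) (f : Module.End ℂ W)
    (hf : f ∈ commutant r) : avgProj r f = f := by
  rw [avgProj_apply]
  have hterm : ∀ s : K, r s * f * r s⁻¹ = f := by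
    intro s
    rw [hf s, mul_assoc, r_mul_r_inv, mul_one]
  rw [Finset.sum_congr rfl (fun s _ => hterm s), Finset.sum_const, Finset.card_univ,
    ← Nat.cast_smul_eq_nsmul ℂ, smul_smul, inv_mul_cancel₀, one_smul]
  exact_mod_cast Fintype.card_ne_zero

lemma avgProj_isProj (r : K →* Module.End ℂ W) :
    IsProj (commutant r) (avgProj r) :=
  ⟨avgProj_mem r, avgProj_fixed r⟩

lemma card_mul_finrank (r : K →* Module.End ℂ W) :
    (Fintype.card K : ℂ) * (finrank ℂ (commutant r) : ℂ)
      = ∑ s : K, trace ℂ W (r s) * trace ℂ W (r s⁻¹) := by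
  have h1 : trace ℂ (Module.End ℂ W) (avgProj r) = (finrank ℂ (commutant r) : ℂ) :=
    (avgProj_isProj r).trace
  have h2 : trace ℂ (Module.End ℂ W) (avgProj r)
      = (Fintype.card K : ℂ)⁻¹ * ∑ s : K, trace ℂ W (r s) * trace ℂ W (r s⁻¹) := by
    rw [avgProj, map_smul, map_sum, smul_eq_mul]
    congr 1
    exact Finset.sum_congr rfl fun s _ => trace_conjMap _ _
  have hc : (Fintype.card K : ℂ) ≠ 0 := by exact_mod_cast Fintype.card_ne_zero
  rw [← h1, h2, ← mul_assoc, mul_inv_cancel₀ hc, one_mul]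

end Commutant

/-! ### From a large commutant to a traceless commuting endomorphism -/

lemma exists_traceless {K : Type} [Group K] (hW : finrank ℂ W = 2)
    (r : K →* Module.End ℂ W) (hr : 2 ≤ finrank ℂ (commutant r)) :
    ∃ f : Module.End ℂ W, trace ℂ W f = 0 ∧ f ≠ 0 ∧ ∀ s : K, r s * f = f * r s := by
  have hnt : Nontrivial W := by
    rw [← Module.finrank_pos_iff (R := ℂ)]
    omega
  have hone : (1 : Module.End ℂ W) ≠ 0 := one_ne_zero
  have hnle : ¬(commutant r ≤ ℂ ∙ (1 : Module.End ℂ W)) := by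
    intro hle
    have h1 := Submodule.finrank_mono hle
    rw [finrank_span_singleton hone] at h1
    omega
  obtain ⟨g, hg, hgspan⟩ := SetLike.not_le_iff_exists.mp hnle
  refine ⟨g - (trace ℂ W g / 2) • 1, ?_, ?_, ?_⟩
  · rw [map_sub, map_smul, trace_one, hW, smul_eq_mul]
    push_cast
    ring
  · intro h0
    apply hgspan
    have hgeq : g = (trace ℂ W g / 2) • 1 := by rwa [sub_eq_zero] at h0
    rw [hgeq]
    exact Submodule.smul_mem _ _ (Submodule.mem_span_singleton_self _)
  · intro s
    have h1 := hg s
    rw [mul_sub, sub_mul, h1, mul_smul_comm, smul_mul_assoc, mul_one, one_mul]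

lemma reducible_of_traceless {K : Type} [Group K] (hW : finrank ℂ W = 2)
    (r : K →* Module.End ℂ W) (f : Module.End ℂ W) (htr : trace ℂ W f = 0)
    (hne : f ≠ 0) (hcomm : ∀ s : K, r s * f = f * r s) :
    ∃ p : Submodule ℂ W, (∀ s : K, ∀ x ∈ p, r s x ∈ p) ∧ p ≠ ⊥ ∧ p ≠ ⊤ := by
  have hnt : Nontrivial W := by
    rw [← Module.finrank_pos_iff (R := ℂ)]
    omega
  obtain ⟨c, hc⟩ := Module.End.exists_eigenvalue f
  refine ⟨f.eigenspace c, ?_, ?_, ?_⟩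
  · intro s x hx
    rw [Module.End.mem_eigenspace_iff] at hx ⊢
    have : f (r s x) = r s (f x) := by
      have := congrArg (fun g => g x) (hcomm s)
      simpa [Module.End.mul_eq_comp] using this.symm
    rw [this, hx, map_smul]
  · exact Module.End.hasEigenvalue_iff.mp hc
  · intro htop
    have hfc : f = c • 1 := by
      ext x
      have hx : x ∈ f.eigenspace c := htop ▸ Submodule.mem_top
      rw [Module.End.mem_eigenspace_iff] at hx
      simpa using hx
    have htr2 : trace ℂ W f = c * 2 := by
      rw [hfc, map_smul, trace_one, hW, smul_eq_mul]
      norm_num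
    have hc0 : c = 0 := by
      have h0 : c * 2 = 0 := by rw [← htr2, htr]
      rcases mul_eq_zero.mp h0 with h0 | h0
      · exact h0
      · exact absurd h0 two_ne_zero
    apply hne
    rw [hfc, hc0, zero_smul]

end Stmt12Aux

namespace Stmt12Aux

open LinearMap Module


lemma two_le_commutant [Fintype G] (ρ ρ' : FDRep ℂ G)
    (h2 : finrank ℂ ρ = 2) (h2' : finrank ℂ ρ' = 2)
    (h : ∀ s : G, FDRep.cp ρ (s * s) = FDRep.cp ρ' (s * s))
    (hε : ∃ s : G, LinearMap.det (ρ'.ρ s) ≠ LinearMap.det (ρ.ρ s)) :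
    2 ≤ finrank ℂ (commutant ρ'.ρ) := by
  classical
  set d : G → ℂ := fun s => LinearMap.det (ρ.ρ s) with hd
  set d' : G → ℂ := fun s => LinearMap.det (ρ'.ρ s) with hd'
  set a : G → ℂ := fun s => trace ℂ ρ (ρ.ρ s) with ha
  set a' : G → ℂ := fun s => trace ℂ ρ' (ρ'.ρ s) with ha'
  have hdmul : ∀ s t : G, d (s * t) = d s * d t := by
    intro s t; simp only [hd, map_mul]
  have hdmul' : ∀ s t : G, d' (s * t) = d' s * d' t := by
    intro s t; simp only [hd', map_mul]
  have hdone : d 1 = 1 := by simp only [hd, map_one]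
  have hdone' : d' 1 = 1 := by simp only [hd', map_one]
  have hdinv : ∀ s : G, d s * d s⁻¹ = 1 := by
    intro s; rw [← hdmul, mul_inv_cancel, hdone]
  have hdinv' : ∀ s : G, d' s * d' s⁻¹ = 1 := by
    intro s; rw [← hdmul', mul_inv_cancel, hdone']
  have hdne : ∀ s : G, d s ≠ 0 := fun s => left_ne_zero_of_mul_eq_one (hdinv s)
  have hdne' : ∀ s : G, d' s ≠ 0 := fun s => left_ne_zero_of_mul_eq_one (hdinv' s)
  -- consequences of equal characteristic polynomials on squares
  have htr2 : ∀ s : G, a s ^ 2 - 2 * d s = a' s ^ 2 - 2 * d' s := by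
    intro s
    have e1 : trace ℂ ρ (ρ.ρ (s * s)) = trace ℂ ρ' (ρ'.ρ (s * s)) := by
      rw [end_trace_cp h2, end_trace_cp h2']
      have := h s
      unfold FDRep.cp at this
      rw [this]
    rw [map_mul ρ.ρ s s, map_mul ρ'.ρ s s, end_trace_sq h2, end_trace_sq h2'] at e1
    simp only [ha, ha', hd, hd']
    exact e1
  have hdet2 : ∀ s : G, d s ^ 2 = d' s ^ 2 := by
    intro s
    have e1 : LinearMap.det (ρ.ρ (s * s)) = LinearMap.det (ρ'.ρ (s * s)) := by
      rw [end_det_cp h2, end_det_cp h2']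
      have := h s
      unfold FDRep.cp at this
      rw [this]
    rw [map_mul ρ.ρ s s, map_mul ρ'.ρ s s, map_mul LinearMap.det, map_mul LinearMap.det] at e1
    simp only [hd, hd', sq]
    exact e1
  -- the subgroup where the determinants agree
  set H : Subgroup G :=
    { carrier := {s | d' s = d s}
      mul_mem' := by
        intro s t hs ht
        show d' (s * t) = d (s * t)
        rw [hdmul, hdmul', hs, ht]
      one_mem' := by
        show d' 1 = d 1
        rw [hdone, hdone']
      inv_mem' := by
        intro s hs
        show d' s⁻¹ = d s⁻¹
        have hs' : d' s = d s := hs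
        rw [← inv_eq_of_mul_eq_one_right (hdinv' s), ← inv_eq_of_mul_eq_one_right (hdinv s), hs'] }
    with hH
  have hmemH : ∀ s : G, s ∈ H ↔ d' s = d s := fun s => Iff.rfl
  have hnotH : ∀ s : G, s ∉ H → d' s = -d s := by
    intro s hs
    have hne : d' s ≠ d s := fun hc => hs ((hmemH s).mpr hc)
    have hz : (d' s - d s) * (d' s + d s) = 0 := by
      linear_combination -(hdet2 s)
    rcases mul_eq_zero.mp hz with hz1 | hz1
    · exact absurd (by linear_combination hz1) hne
    · linear_combination hz1
  have hinvnotH : ∀ s : G, s ∉ H → d' s⁻¹ = -d s⁻¹ := by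
    intro s hs
    rw [← inv_eq_of_mul_eq_one_right (hdinv' s), ← inv_eq_of_mul_eq_one_right (hdinv s),
      hnotH s hs, neg_inv]
  -- the product of traces
  set cc : G → ℂ := fun s => a s * a s⁻¹ with hcc
  set cc' : G → ℂ := fun s => a' s * a' s⁻¹ with hcc'
  have hia : ∀ s : G, d s * a s⁻¹ = a s := by
    intro s
    exact end_trace_inv h2 (r_mul_r_inv ρ.ρ s)
  have hia' : ∀ s : G, d' s * a' s⁻¹ = a' s := by
    intro s
    exact end_trace_inv h2' (r_mul_r_inv ρ'.ρ s)
  have hccd : ∀ s : G, d s * cc s = a s ^ 2 := by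
    intro s
    have := hia s
    simp only [hcc]
    linear_combination a s * this
  have hccd' : ∀ s : G, d' s * cc' s = a' s ^ 2 := by
    intro s
    have := hia' s
    simp only [hcc']
    linear_combination a' s * this
  -- the two pointwise identities
  have E6a : ∀ s : G, s ∈ H → cc' s = cc s := by
    intro s hs
    have hs' : d' s = d s := hs
    have ha2 : a' s ^ 2 = a s ^ 2 := by linear_combination -htr2 s + 2 * hs'
    apply mul_left_cancel₀ (hdne s)
    calc d s * cc' s = d' s * cc' s := by rw [hs']
      _ = a' s ^ 2 := hccd' s
      _ = a s ^ 2 := ha2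
      _ = d s * cc s := (hccd s).symm
  have E6b : ∀ s : G, s ∉ H → cc' s = 4 - cc s := by
    intro s hs
    have hs' : d' s = -d s := hnotH s hs
    have ha2 : a' s ^ 2 = a s ^ 2 - 4 * d s := by linear_combination -htr2 s + 2 * hs'
    have hneg : -d s * cc' s = a' s ^ 2 := by rw [← hs']; exact hccd' s
    apply mul_left_cancel₀ (hdne s)
    calc d s * cc' s = -(a' s ^ 2) := by linear_combination -hneg
      _ = -(a s ^ 2) + 4 * d s := by rw [ha2]; ring
      _ = -(d s * cc s) + 4 * d s := by rw [hccd s]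
      _ = d s * (4 - cc s) := by ring
  -- counting
  obtain ⟨t₀, ht₀'⟩ := hε
  have ht₀ : t₀ ∉ H := ht₀'
  set SH : Finset G := Finset.univ.filter (· ∈ H) with hSH
  set SK : Finset G := Finset.univ.filter (· ∉ H) with hSK
  have hbij : SH.card = SK.card := by
    refine Finset.card_bij (fun s _ => t₀ * s) ?_ ?_ ?_
    · intro s hs
      simp only [hSH, Finset.mem_filter, Finset.mem_univ, true_and] at hs
      simp only [hSK, Finset.mem_filter, Finset.mem_univ, true_and]
      intro hmem
      exact ht₀ (by simpa using H.mul_mem hmem (H.inv_mem hs))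
    · intro s1 hs1 s2 hs2 heq
      exact mul_left_cancel heq
    · intro u hu
      simp only [hSK, Finset.mem_filter, Finset.mem_univ, true_and] at hu
      refine ⟨t₀⁻¹ * u, ?_, show t₀ * (t₀⁻¹ * u) = u by rw [← mul_assoc, mul_inv_cancel, one_mul]⟩
      simp only [hSH, Finset.mem_filter, Finset.mem_univ, true_and]
      show d' (t₀⁻¹ * u) = d (t₀⁻¹ * u)
      rw [hdmul, hdmul', hinvnotH t₀ ht₀, hnotH u hu]
      ring
  have hcover : SH.card + SK.card = Fintype.card G := by
    rw [hSH, hSK, ← Finset.card_univ (α := G)]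
    exact Finset.card_filter_add_card_filter_not (fun s => s ∈ H)
  -- the three projector identities
  set m : ℕ := finrank ℂ (commutant ρ.ρ) with hm
  set m' : ℕ := finrank ℂ (commutant ρ'.ρ) with hm'
  set mH : ℕ := finrank ℂ (commutant (ρ.ρ.comp H.subtype)) with hmH
  have E1 : (Fintype.card G : ℂ) * (m : ℂ) = ∑ s : G, cc s := card_mul_finrank ρ.ρ
  have E2 : (Fintype.card G : ℂ) * (m' : ℂ) = ∑ s : G, cc' s := card_mul_finrank ρ'.ρ
  have E3 : (Fintype.card ↥H : ℂ) * (mH : ℂ) = ∑ s : ↥H, cc (s : G) := by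
    rw [card_mul_finrank (ρ.ρ.comp H.subtype)]
    refine Finset.sum_congr rfl fun s _ => ?_
    simp only [MonoidHom.comp_apply, Subgroup.coe_subtype, hcc]
    congr 1
  have E3' : ∑ s : ↥H, cc (s : G) = ∑ s ∈ SH, cc s := by
    rw [hSH]
    exact (Finset.sum_subtype _ (by simp) cc).symm
  have hcardH : Fintype.card ↥H = SH.card := by
    rw [hSH]
    exact Fintype.card_subtype _
  -- the master equation
  have hsum : ∑ s : G, cc s = ∑ s ∈ SH, cc s + ∑ s ∈ SK, cc s := by
    rw [hSH, hSK]
    exact (Finset.sum_filter_add_sum_filter_not _ _ _).symm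
  have hsum' : ∑ s : G, cc' s = ∑ s ∈ SH, cc s + (4 * SK.card - ∑ s ∈ SK, cc s) := by
    rw [hSH, hSK, ← Finset.sum_filter_add_sum_filter_not Finset.univ (· ∈ H) cc']
    congr 1
    · refine Finset.sum_congr rfl fun s hs => ?_
      exact E6a s (by simpa using (Finset.mem_filter.mp hs).2)
    · rw [Finset.sum_congr rfl fun s hs => E6b s (by simpa using (Finset.mem_filter.mp hs).2)]
      rw [Finset.sum_sub_distrib, Finset.sum_const, nsmul_eq_mul]
      ring
  have hkey : (Fintype.card G : ℂ) * ((m' : ℂ) + (m : ℂ))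
      = (Fintype.card G : ℂ) * ((mH : ℂ) + 2) := by
    have hG2 : (Fintype.card G : ℂ) = 2 * (SH.card : ℂ) := by
      have : (Fintype.card G : ℕ) = SH.card + SK.card := hcover.symm
      rw [this, ← hbij]
      push_cast
      ring
    have hEH : ∑ s ∈ SH, cc s = (SH.card : ℂ) * (mH : ℂ) := by
      rw [← E3', ← E3, hcardH]
    calc (Fintype.card G : ℂ) * ((m' : ℂ) + (m : ℂ))
        = (Fintype.card G : ℂ) * (m' : ℂ) + (Fintype.card G : ℂ) * (m : ℂ) := by ring
      _ = (∑ s : G, cc' s) + ∑ s : G, cc s := by rw [E1, E2]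
      _ = 2 * ∑ s ∈ SH, cc s + 4 * SK.card := by rw [hsum, hsum']; ring
      _ = 2 * ((SH.card : ℂ) * (mH : ℂ)) + 4 * SH.card := by rw [hEH, hbij]
      _ = (2 * (SH.card : ℂ)) * ((mH : ℂ) + 2) := by ring
      _ = (Fintype.card G : ℂ) * ((mH : ℂ) + 2) := by rw [hG2]
  have hGne : (Fintype.card G : ℂ) ≠ 0 := by exact_mod_cast Fintype.card_ne_zero
  have hkey2 : (m' : ℂ) + (m : ℂ) = (mH : ℂ) + 2 := mul_left_cancel₀ hGne hkey
  have hkey3 : m' + m = mH + 2 := by exact_mod_cast hkey2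
  -- monotonicity
  have hmono : m ≤ mH := by
    apply Submodule.finrank_mono
    intro f hf
    intro s
    exact hf (s : G)
  omega

end Stmt12Aux

open Stmt12Aux

/-- If `ρ(s²)` and `ρ'(s²)` have the same characteristic polynomial for all `s` and the
quadratic character `det ρ' / det ρ` is nontrivial, then both `ρ` and `ρ'` are
reducible; in fact `ad⁰(ρ')` contains the trivial representation, i.e. there is a
nonzero traceless endomorphism commuting with the action of `ρ'`. -/
theorem stmt12 [Finite G] (ρ ρ' : FDRep ℂ G)
    (h2 : finrank ℂ ρ = 2) (h2' : finrank ℂ ρ' = 2)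
    (h : ∀ s : G, FDRep.cp ρ (s * s) = FDRep.cp ρ' (s * s))
    (hε : ∃ s : G, LinearMap.det (ρ'.ρ s) ≠ LinearMap.det (ρ.ρ s)) :
    FDRep.Reducible ρ ∧ FDRep.Reducible ρ' ∧
    ∃ f : Module.End ℂ ρ', LinearMap.trace ℂ ρ' f = 0 ∧ f ≠ 0 ∧
      ∀ s : G, (ρ'.ρ s) ∘ₗ f = f ∘ₗ (ρ'.ρ s) := by
  have : Fintype G := Fintype.ofFinite G
  have hA : 2 ≤ finrank ℂ (commutant ρ'.ρ) := two_le_commutant ρ ρ' h2 h2' h hε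
  have hB : 2 ≤ finrank ℂ (commutant ρ.ρ) :=
    two_le_commutant ρ' ρ h2' h2 (fun s => (h s).symm) (hε.imp fun s hs => hs.symm)
  obtain ⟨f', htr', hne', hcomm'⟩ := exists_traceless h2' ρ'.ρ hA
  obtain ⟨f, htr, hne, hcomm⟩ := exists_traceless h2 ρ.ρ hB
  refine ⟨?_, ?_, f', htr', hne', fun s => ?_⟩
  · exact reducible_of_traceless h2 ρ.ρ f htr hne hcomm
  · exact reducible_of_traceless h2' ρ'.ρ f' htr' hne' hcomm'
  · rw [← Module.End.mul_eq_comp, ← Module.End.mul_eq_comp]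
    exact hcomm' s
end
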